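/- arXiv:1507.06840 — 6 statements merged into one kernel-verified Lean document; each statement's English description precedes it below -/
import Mathlib

section
/- Let Z be a topologically ordered *-space, p an increasing continuous seminorm on Z, and E a VE-space over Z. Then the map p̃(h) = p([h,h])^{1/2} is a seminorm on E, i.e., it additionally satisfies the triangle inequality p̃(h+k) ≤ p̃(h) + p̃(k). -/
/-- An ordered *-space: a complex vector space with a conjugate-linear involution
and a strict cone of selfadjoint elements. The order is `x ≤ y ↔ y - x ∈ pos`. -/
structure OrderedStarSpace (Z : Type*) [AddCommGroup Z] [Module ℂ Z] where
  star : Z → Z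
  star_add : ∀ x y : Z, star (x + y) = star x + star y
  star_smul : ∀ (c : ℂ) (x : Z), star (c • x) = (starRingEnd ℂ) c • star x
  star_involutive : ∀ x : Z, star (star x) = x
  pos : Set Z
  pos_add : ∀ x ∈ pos, ∀ y ∈ pos, x + y ∈ pos
  pos_smul : ∀ (r : ℝ), 0 ≤ r → ∀ x ∈ pos, (r : ℂ) • x ∈ pos
  pos_strict : ∀ x ∈ pos, -x ∈ pos → x = 0
  pos_selfadjoint : ∀ x ∈ pos, star x = x

/-- A `Z`-valued gramian making `E` a VE-space over the ordered *-space `Z`. -/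
structure VEGramian {Z : Type*} [AddCommGroup Z] [Module ℂ Z]
    (O : OrderedStarSpace Z) (E : Type*) [AddCommGroup E] [Module ℂ E] where
  ip : E → E → Z
  add_right : ∀ x y z : E, ip x (y + z) = ip x y + ip x z
  smul_right : ∀ (c : ℂ) (x y : E), ip x (c • y) = c • ip x y
  herm : ∀ x y : E, ip x y = O.star (ip y x)
  ip_pos : ∀ x : E, ip x x ∈ O.pos
  definite : ∀ x : E, ip x x = 0 → x = 0

/-- An increasing seminorm on the ordered *-space `Z`. -/
structure IncSeminorm {Z : Type*} [AddCommGroup Z] [Module ℂ Z]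
    (O : OrderedStarSpace Z) where
  p : Z → ℝ
  nonneg : ∀ x : Z, 0 ≤ p x
  add_le : ∀ x y : Z, p (x + y) ≤ p x + p y
  smul : ∀ (c : ℂ) (x : Z), p (c • x) = ‖c‖ * p x
  mono : ∀ x y : Z, x ∈ O.pos → y - x ∈ O.pos → p x ≤ p y

section Aux

variable {Z E : Type*} [AddCommGroup Z] [Module ℂ Z] [AddCommGroup E] [Module ℂ E]
variable {O : OrderedStarSpace Z} (G : VEGramian O E)

lemma VEGramian.smul_left' (c : ℂ) (x y : E) :
    G.ip (c • x) y = (starRingEnd ℂ) c • G.ip x y := by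
  rw [G.herm (c • x) y, G.smul_right, O.star_smul, ← G.herm]

lemma VEGramian.add_left' (x y z : E) : G.ip (x + y) z = G.ip x z + G.ip y z := by
  rw [G.herm (x + y) z, G.add_right, O.star_add, ← G.herm, ← G.herm]

lemma VEGramian.neg_right' (x y : E) : G.ip x (-y) = - G.ip x y := by
  have h1 := G.smul_right (-1 : ℂ) x y
  simpa using h1

lemma VEGramian.neg_left' (x y : E) : G.ip (-x) y = - G.ip x y := by
  have h1 := G.smul_left' (-1 : ℂ) x y
  simpa using h1

lemma VEGramian.sub_right' (x y z : E) : G.ip x (y - z) = G.ip x y - G.ip x z := by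
  rw [sub_eq_add_neg, G.add_right, G.neg_right', sub_eq_add_neg]

lemma VEGramian.sub_left' (x y z : E) : G.ip (x - y) z = G.ip x z - G.ip y z := by
  rw [sub_eq_add_neg, G.add_left', G.neg_left', sub_eq_add_neg]

end Aux

set_option maxHeartbeats 1000000 in
/-- for an increasing continuous seminorm `p` on a topologically
ordered *-space `Z` and a VE-space `E` over `Z`, the map `p̃(h) = p([h,h])^{1/2}`
satisfies the triangle inequality, hence it is a seminorm on `E`. -/
theorem seminorm_of_gramian_triangle {Z E : Type*} [AddCommGroup Z] [Module ℂ Z]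
    [TopologicalSpace Z] [AddCommGroup E] [Module ℂ E]
    (O : OrderedStarSpace Z) (N : IncSeminorm O) (hcont : Continuous N.p)
    (G : VEGramian O E) :
    ∀ h k : E, Real.sqrt (N.p (G.ip (h + k) (h + k))) ≤
      Real.sqrt (N.p (G.ip h h)) + Real.sqrt (N.p (G.ip k k)) := by
  intro h k
  set X := G.ip h h with hX
  set Y := G.ip k k with hY
  set S := G.ip (h + k) (h + k) with hS
  set A := N.p X with hA
  set B := N.p Y with hB
  have hA0 : 0 ≤ A := N.nonneg _
  have hB0 : 0 ≤ B := N.nonneg _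
  have hS0 : 0 ≤ N.p S := N.nonneg _
  have hSpos : S ∈ O.pos := G.ip_pos _
  have hXpos : X ∈ O.pos := G.ip_pos _
  clear_value X Y S A B
  -- expansion of S
  have hSexp : S = X + G.ip h k + G.ip k h + Y := by
    rw [hS, hX, hY, G.add_left', G.add_right, G.add_right]; abel
  -- key inequality: for all r > 0, p(S) ≤ (1+r²)A + (1+r⁻²)B
  have key : ∀ r : ℝ, 0 < r → N.p S ≤ (1 + r^2) * A + (1 + r⁻¹^2) * B := by
    intro r hr
    set c : ℂ := (r : ℂ) with hc
    set d : ℂ := ((r⁻¹ : ℝ) : ℂ) with hd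
    have hcd : c * d = 1 := by
      rw [hc, hd, ← Complex.ofReal_mul, mul_inv_cancel₀ hr.ne']
      norm_num
    have hP : G.ip (c • h - d • k) (c • h - d • k) ∈ O.pos := G.ip_pos _
    have hPeq : G.ip (c • h - d • k) (c • h - d • k)
        = (c * c) • X + (d • d • Y) - G.ip h k - G.ip k h := by
      have h1 : (starRingEnd ℂ) c = c := by rw [hc, Complex.conj_ofReal]
      have h2 : (starRingEnd ℂ) d = d := by rw [hd, Complex.conj_ofReal]
      simp only [G.sub_left', G.sub_right', G.smul_left', G.smul_right, h1, h2,
        smul_smul, hX, hY]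
      rw [hcd, mul_comm d c, hcd, one_smul, one_smul]
      abel
    -- the dominating element
    set T : Z := ((1 + r^2 : ℝ) : ℂ) • X + ((1 + r⁻¹^2 : ℝ) : ℂ) • Y with hT
    have hdiff : T - S ∈ O.pos := by
      have heq : T - S = G.ip (c • h - d • k) (c • h - d • k) := by
        rw [hPeq, hT, hSexp]
        push_cast
        rw [hc, hd]
        module
      rw [heq]; exact hP
    have hpS_le : N.p S ≤ N.p T := N.mono S T hSpos hdiff
    have hpT : N.p T ≤ (1 + r^2) * A + (1 + r⁻¹^2) * B := by
      calc N.p T ≤ N.p (((1 + r^2 : ℝ) : ℂ) • X) + N.p (((1 + r⁻¹^2 : ℝ) : ℂ) • Y) :=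
            N.add_le _ _
        _ = (1 + r^2) * A + (1 + r⁻¹^2) * B := by
            rw [N.smul, N.smul, Complex.norm_real, Complex.norm_real, Real.norm_eq_abs, Real.norm_eq_abs,
              abs_of_nonneg (by positivity), abs_of_nonneg (by positivity), hA, hB]
    exact hpS_le.trans hpT
  -- conclude: p(S) ≤ (√A + √B)²
  set a := Real.sqrt A with ha
  set b := Real.sqrt B with hb
  have ha0 : 0 ≤ a := Real.sqrt_nonneg _
  have hb0 : 0 ≤ b := Real.sqrt_nonneg _
  have haA : a ^ 2 = A := Real.sq_sqrt hA0
  have hbB : b ^ 2 = B := Real.sq_sqrt hB0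
  have hmain : N.p S ≤ (a + b) ^ 2 := by
    refine le_of_forall_pos_le_add ?_
    intro ε hε
    set δ : ℝ := ε / (a + b + 1) with hδ
    have hδ0 : 0 < δ := by positivity
    set r : ℝ := Real.sqrt ((b + δ) / (a + δ)) with hr
    have hfrac : 0 < (b + δ) / (a + δ) := by positivity
    have hrpos : 0 < r := Real.sqrt_pos.mpr hfrac
    have hr2 : r ^ 2 = (b + δ) / (a + δ) := Real.sq_sqrt hfrac.le
    have hrinv2 : r⁻¹ ^ 2 = (a + δ) / (b + δ) := by
      rw [inv_pow, hr2, inv_div]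
    have h1 := key r hrpos
    have h2 : (1 + r^2) * A + (1 + r⁻¹^2) * B ≤ (a + b)^2 + δ * (a + b) := by
      rw [hr2, hrinv2, ← haA, ← hbB]
      have e1 : (b + δ) / (a + δ) * a ^ 2 ≤ (b + δ) * a := by
        rw [div_mul_eq_mul_div, div_le_iff₀ (by positivity)]
        nlinarith [mul_nonneg (mul_nonneg (by positivity : (0:ℝ) ≤ b + δ) ha0) hδ0.le]
      have e2 : (a + δ) / (b + δ) * b ^ 2 ≤ (a + δ) * b := by
        rw [div_mul_eq_mul_div, div_le_iff₀ (by positivity)]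
        nlinarith [mul_nonneg (mul_nonneg (by positivity : (0:ℝ) ≤ a + δ) hb0) hδ0.le]
      nlinarith
    have h3 : δ * (a + b) ≤ ε := by
      rw [hδ, div_mul_eq_mul_div, div_le_iff₀ (by positivity)]
      nlinarith [hε.le]
    linarith
  calc Real.sqrt (N.p S) ≤ Real.sqrt ((a + b) ^ 2) := Real.sqrt_le_sqrt hmain
    _ = a + b := by rw [Real.sqrt_sq (by positivity)]
end

section
/- Let E be a VE-space over a topologically ordered *-space Z and let p be an increasing continuous seminorm on Z. Then for all e, f ∈ E, p([e,f]) ≤ 4 · p([e,e])^{1/2} · p([f,f])^{1/2}. -/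
/-- Corollary: surrogate Schwarz inequality: for an increasing
continuous seminorm `p` on a topologically ordered *-space `Z` and a VE-space
`E` over `Z`, `p([e,f]) ≤ 4 p([e,e])^{1/2} p([f,f])^{1/2}`. -/
theorem four_schwarz {Z E : Type*} [AddCommGroup Z] [Module ℂ Z]
    [TopologicalSpace Z] [AddCommGroup E] [Module ℂ E]
    (O : OrderedStarSpace Z) (N : IncSeminorm O) (hcont : Continuous N.p)
    (G : VEGramian O E) :
    ∀ e f : E, N.p (G.ip e f) ≤
      4 * Real.sqrt (N.p (G.ip e e)) * Real.sqrt (N.p (G.ip f f)) := by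
  intro e f
  -- left (conjugate-)linearity
  have add_left : ∀ x y z : E, G.ip (x + y) z = G.ip x z + G.ip y z := by
    intro x y z
    rw [G.herm (x + y) z, G.add_right, O.star_add, ← G.herm, ← G.herm]
  have smul_left : ∀ (c : ℂ) (x y : E),
      G.ip (c • x) y = (starRingEnd ℂ) c • G.ip x y := by
    intro c x y
    rw [G.herm (c • x) y, G.smul_right, O.star_smul, ← G.herm]
  have expand : ∀ (c : ℂ) (x y : E), G.ip (x + c • y) (x + c • y) =
      G.ip x x + c • G.ip x y + (starRingEnd ℂ) c • G.ip y x
        + ((starRingEnd ℂ) c * c) • G.ip y y := by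
    intro c x y
    rw [add_left, G.add_right, G.add_right, smul_left, smul_left,
      G.smul_right c x y, G.smul_right c y y, smul_smul]
    abel
  -- Lemma A : parallelogram-type bound
  have lemA : ∀ h k : E, N.p (G.ip (h + k) (h + k)) ≤
      2 * (N.p (G.ip h h) + N.p (G.ip k k)) := by
    intro h k
    have h1 : G.ip (h + k) (h + k) ∈ O.pos := G.ip_pos _
    have h2 : ((2:ℂ) • G.ip h h + (2:ℂ) • G.ip k k) - G.ip (h + k) (h + k)
        ∈ O.pos := by
      have hrw : ((2:ℂ) • G.ip h h + (2:ℂ) • G.ip k k) - G.ip (h + k) (h + k)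
          = G.ip (h + (-1:ℂ) • k) (h + (-1:ℂ) • k) := by
        have e1 : G.ip (h + k) (h + k) = G.ip (h + (1:ℂ) • k) (h + (1:ℂ) • k) := by
          rw [one_smul]
        rw [e1, expand, expand]
        simp only [map_one, map_neg]
        module
      rw [hrw]; exact G.ip_pos _
    have hmono := N.mono _ _ h1 h2
    calc N.p (G.ip (h + k) (h + k))
        ≤ N.p ((2:ℂ) • G.ip h h + (2:ℂ) • G.ip k k) := hmono
      _ ≤ N.p ((2:ℂ) • G.ip h h) + N.p ((2:ℂ) • G.ip k k) := N.add_le _ _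
      _ = 2 * (N.p (G.ip h h) + N.p (G.ip k k)) := by
          rw [N.smul, N.smul]
          simp
          ring
  -- Lemma B : crude Schwarz via polarisation
  have lemB : ∀ x y : E, N.p (G.ip x y) ≤
      2 * (N.p (G.ip x x) + N.p (G.ip y y)) := by
    intro x y
    have hpol : (4:ℂ) • G.ip x y =
        G.ip (x + (1:ℂ) • y) (x + (1:ℂ) • y)
        + (-Complex.I) • G.ip (x + Complex.I • y) (x + Complex.I • y)
        + (-1:ℂ) • G.ip (x + (-1:ℂ) • y) (x + (-1:ℂ) • y)
        + Complex.I • G.ip (x + (-Complex.I) • y) (x + (-Complex.I) • y) := by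
      rw [expand, expand, expand, expand]
      simp only [map_one, map_neg, Complex.conj_I]
      match_scalars <;> simp [Complex.I_mul_I] <;> ring
    have habsI : ‖Complex.I‖ = 1 := by simp
    have hT : ∀ c : ℂ, ‖c‖ = 1 →
        N.p (G.ip (x + c • y) (x + c • y)) ≤
          2 * (N.p (G.ip x x) + N.p (G.ip y y)) := by
      intro c hc
      have hcy : N.p (G.ip (c • y) (c • y)) = N.p (G.ip y y) := by
        rw [smul_left, G.smul_right, smul_smul, N.smul]
        simp [norm_mul, Complex.norm_conj, hc]
      calc N.p (G.ip (x + c • y) (x + c • y))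
          ≤ 2 * (N.p (G.ip x x) + N.p (G.ip (c • y) (c • y))) := lemA x (c • y)
        _ = 2 * (N.p (G.ip x x) + N.p (G.ip y y)) := by rw [hcy]
    have h4 : (4:ℝ) * N.p (G.ip x y) = N.p ((4:ℂ) • G.ip x y) := by
      rw [N.smul]
      norm_num
    have hsum : N.p ((4:ℂ) • G.ip x y) ≤
        N.p (G.ip (x + (1:ℂ) • y) (x + (1:ℂ) • y))
        + N.p (G.ip (x + Complex.I • y) (x + Complex.I • y))
        + N.p (G.ip (x + (-1:ℂ) • y) (x + (-1:ℂ) • y))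
        + N.p (G.ip (x + (-Complex.I) • y) (x + (-Complex.I) • y)) := by
      rw [hpol]
      have s1 := N.add_le (G.ip (x + (1:ℂ) • y) (x + (1:ℂ) • y)
          + (-Complex.I) • G.ip (x + Complex.I • y) (x + Complex.I • y)
          + (-1:ℂ) • G.ip (x + (-1:ℂ) • y) (x + (-1:ℂ) • y))
          (Complex.I • G.ip (x + (-Complex.I) • y) (x + (-Complex.I) • y))
      have s2 := N.add_le (G.ip (x + (1:ℂ) • y) (x + (1:ℂ) • y)
          + (-Complex.I) • G.ip (x + Complex.I • y) (x + Complex.I • y))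
          ((-1:ℂ) • G.ip (x + (-1:ℂ) • y) (x + (-1:ℂ) • y))
      have s3 := N.add_le (G.ip (x + (1:ℂ) • y) (x + (1:ℂ) • y))
          ((-Complex.I) • G.ip (x + Complex.I • y) (x + Complex.I • y))
      have r1 : N.p ((-Complex.I) • G.ip (x + Complex.I • y) (x + Complex.I • y))
          = N.p (G.ip (x + Complex.I • y) (x + Complex.I • y)) := by
        rw [N.smul]; simp
      have r2 : N.p ((-1:ℂ) • G.ip (x + (-1:ℂ) • y) (x + (-1:ℂ) • y))
          = N.p (G.ip (x + (-1:ℂ) • y) (x + (-1:ℂ) • y)) := by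
        rw [N.smul]; simp
      have r3 : N.p (Complex.I • G.ip (x + (-Complex.I) • y) (x + (-Complex.I) • y))
          = N.p (G.ip (x + (-Complex.I) • y) (x + (-Complex.I) • y)) := by
        rw [N.smul]; simp
      linarith
    have t1 := hT 1 (by simp)
    have t2 := hT Complex.I habsI
    have t3 := hT (-1) (by simp)
    have t4 := hT (-Complex.I) (by simp)
    linarith
  -- rescaling
  have keyt : ∀ t : ℝ, 0 < t → N.p (G.ip e f) ≤
      2 * (t * N.p (G.ip e e) + N.p (G.ip f f) / t) := by
    intro t ht
    set s : ℝ := Real.sqrt t with hs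
    have hspos : 0 < s := Real.sqrt_pos.2 ht
    have hss : s * s = t := Real.mul_self_sqrt ht.le
    have hsne : ((s:ℂ)) ≠ 0 := by exact_mod_cast hspos.ne'
    have hEq : G.ip ((s:ℂ) • e) (((s:ℂ))⁻¹ • f) = G.ip e f := by
      rw [smul_left, G.smul_right, smul_smul, Complex.conj_ofReal,
        mul_inv_cancel₀ hsne, one_smul]
    have hee : N.p (G.ip ((s:ℂ) • e) ((s:ℂ) • e)) = t * N.p (G.ip e e) := by
      rw [smul_left, G.smul_right, smul_smul, Complex.conj_ofReal, N.smul]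
      congr 1
      rw [norm_mul, Complex.norm_of_nonneg hspos.le, hss]
    have hff : N.p (G.ip (((s:ℂ))⁻¹ • f) (((s:ℂ))⁻¹ • f))
        = N.p (G.ip f f) / t := by
      rw [smul_left, G.smul_right, smul_smul, map_inv₀, Complex.conj_ofReal,
        N.smul, norm_mul]
      have habs : ‖((s:ℂ))⁻¹‖ = s⁻¹ := by
        rw [norm_inv, Complex.norm_of_nonneg hspos.le]
      rw [habs, ← hss]
      field_simp
    have := lemB ((s:ℂ) • e) (((s:ℂ))⁻¹ • f)
    rw [hEq, hee, hff] at this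
    exact this
  have hpnn := N.nonneg (G.ip e f)
  have ha0 := N.nonneg (G.ip e e)
  have hb0 := N.nonneg (G.ip f f)
  set a := N.p (G.ip e e) with hadef
  set b := N.p (G.ip f f) with hbdef
  rcases eq_or_lt_of_le ha0 with ha | ha
  · -- a = 0
    have hz : N.p (G.ip e f) ≤ 0 := by
      by_contra hcon
      push_neg at hcon
      rcases eq_or_lt_of_le hb0 with hb | hb
      · have := keyt 1 one_pos
        rw [← ha, ← hb] at this
        norm_num at this
        linarith
      · have ht : (0:ℝ) < 4 * b / N.p (G.ip e f) := by positivity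
        have hk := keyt _ ht
        rw [← ha] at hk
        have hsimp : b / (4 * b / N.p (G.ip e f)) = N.p (G.ip e f) / 4 := by
          field_simp
        rw [mul_zero, zero_add, hsimp] at hk
        linarith
    have : (0:ℝ) ≤ 4 * Real.sqrt a * Real.sqrt b := by positivity
    linarith
  · rcases eq_or_lt_of_le hb0 with hb | hb
    · -- b = 0
      have hz : N.p (G.ip e f) ≤ 0 := by
        by_contra hcon
        push_neg at hcon
        have ht : (0:ℝ) < N.p (G.ip e f) / (4 * a) := by positivity
        have hk := keyt _ ht
        rw [← hb] at hk
        have hsimp : N.p (G.ip e f) / (4 * a) * a = N.p (G.ip e f) / 4 := by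
          field_simp
        rw [zero_div, add_zero, hsimp] at hk
        linarith
      have : (0:ℝ) ≤ 4 * Real.sqrt a * Real.sqrt b := by positivity
      linarith
    · -- a > 0, b > 0
      set sa := Real.sqrt a with hsa
      set sb := Real.sqrt b with hsb
      have hsaa : sa * sa = a := Real.mul_self_sqrt ha0
      have hsbb : sb * sb = b := Real.mul_self_sqrt hb0
      have hsap : 0 < sa := Real.sqrt_pos.2 ha
      have hsbp : 0 < sb := Real.sqrt_pos.2 hb
      have ht : (0:ℝ) < sb / sa := by positivity
      have hk := keyt _ ht
      have hcalc : 2 * (sb / sa * a + b / (sb / sa)) = 4 * sa * sb := by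
        rw [← hsaa, ← hsbb]
        field_simp
        ring
      rw [hcalc] at hk
      exact hk
end

section
/- Let H be a VE-space over a topologically ordered *-space Z, let T : H → H be a positive adjointable linear operator (i.e., [Th, h] ≥ 0 for all h), and let p be an increasing seminorm on Z. Then p([Th, h]) ≤ p([Th, Th])^{1/2} · p([h, h])^{1/2} for all h ∈ H. -/
/-- Schwarz-type inequality for positive operators: if `T` is a
positive adjointable linear operator on a VE-space `H` over a topologically
ordered *-space `Z` and `p` is an increasing seminorm on `Z`, then
`p([Th,h]) ≤ p([Th,Th])^{1/2} p([h,h])^{1/2}`. -/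
theorem schwarz_for_positive_operator {Z E : Type*} [AddCommGroup Z] [Module ℂ Z]
    [TopologicalSpace Z] [AddCommGroup E] [Module ℂ E]
    (O : OrderedStarSpace Z) (N : IncSeminorm O) (G : VEGramian O E)
    (T : Module.End ℂ E)
    (hadj : ∃ S : Module.End ℂ E, ∀ h g : E, G.ip (T h) g = G.ip h (S g))
    (hTpos : ∀ h : E, G.ip (T h) h ∈ O.pos) :
    ∀ h : E, N.p (G.ip (T h) h) ≤
      Real.sqrt (N.p (G.ip (T h) (T h))) * Real.sqrt (N.p (G.ip h h)) := by
  intro h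
  have star_THh : O.star (G.ip (T h) h) = G.ip (T h) h := O.pos_selfadjoint _ (hTpos h)
  have hsym : G.ip h (T h) = G.ip (T h) h := by
    rw [G.herm h (T h), star_THh]
  have add_left : ∀ x y z : E, G.ip (x + y) z = G.ip x z + G.ip y z := by
    intro x y z
    rw [G.herm (x + y) z, G.add_right, O.star_add, ← G.herm, ← G.herm]
  have smul_left : ∀ (c : ℂ) (x y : E), G.ip (c • x) y = (starRingEnd ℂ) c • G.ip x y := by
    intro c x y
    rw [G.herm (c • x) y, G.smul_right, O.star_smul, ← G.herm]
  have key : ∀ l : ℝ, 0 ≤ l → 2 * l * N.p (G.ip (T h) h) ≤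
      N.p (G.ip h h) + l ^ 2 * N.p (G.ip (T h) (T h)) := by
    intro l hl
    have hpos : G.ip (h - (l : ℂ) • T h) (h - (l : ℂ) • T h) ∈ O.pos := G.ip_pos _
    have expand : G.ip (h - (l : ℂ) • T h) (h - (l : ℂ) • T h)
        = (G.ip h h + ((l ^ 2 : ℝ) : ℂ) • G.ip (T h) (T h))
          - (((2 * l : ℝ) : ℂ)) • G.ip (T h) h := by
      have hsub : h - (l : ℂ) • T h = h + (-(l : ℂ)) • T h := by
        rw [neg_smul, ← sub_eq_add_neg]
      rw [hsub, add_left, G.add_right, G.add_right, smul_left, G.smul_right,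
        G.smul_right, smul_left, smul_smul, hsym]
      simp only [map_neg, Complex.conj_ofReal]
      push_cast
      module
    rw [expand] at hpos
    have hmem : ((2 * l : ℝ) : ℂ) • G.ip (T h) h ∈ O.pos :=
      O.pos_smul (2 * l) (by positivity) _ (hTpos h)
    have hle := N.mono _ _ hmem hpos
    have e1 : N.p (((2 * l : ℝ) : ℂ) • G.ip (T h) h) = 2 * l * N.p (G.ip (T h) h) := by
      rw [N.smul, Complex.norm_real, Real.norm_eq_abs, abs_of_nonneg (by positivity)]
    have e2 : N.p (G.ip h h + ((l ^ 2 : ℝ) : ℂ) • G.ip (T h) (T h))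
        ≤ N.p (G.ip h h) + l ^ 2 * N.p (G.ip (T h) (T h)) := by
      have := N.add_le (G.ip h h) (((l ^ 2 : ℝ) : ℂ) • G.ip (T h) (T h))
      rw [N.smul, Complex.norm_real, Real.norm_eq_abs, abs_of_nonneg (by positivity)] at this
      exact this
    calc 2 * l * N.p (G.ip (T h) h) = N.p (((2 * l : ℝ) : ℂ) • G.ip (T h) h) := e1.symm
      _ ≤ _ := hle
      _ ≤ _ := e2
  set a := N.p (G.ip (T h) h) with ha_def
  set b := N.p (G.ip h h) with hb_def
  set c := N.p (G.ip (T h) (T h)) with hc_def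
  have ha : 0 ≤ a := N.nonneg _
  have hb : 0 ≤ b := N.nonneg _
  have hc : 0 ≤ c := N.nonneg _
  have hsq : a ^ 2 ≤ c * b := by
    rcases eq_or_lt_of_le hc with hc0 | hc0
    · have ha0 : a = 0 := by
        by_contra hne
        have hapos : 0 < a := lt_of_le_of_ne ha (Ne.symm hne)
        have hk := key ((b + 1) / (2 * a)) (by positivity)
        rw [← hc0] at hk
        have h2 : 2 * ((b + 1) / (2 * a)) * a = b + 1 := by field_simp
        nlinarith
      rw [ha0]
      nlinarith
    · have hk := key (a / c) (by positivity)
      have hk' : 2 * a ^ 2 ≤ b * c + a ^ 2 := by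
        calc 2 * a ^ 2 = 2 * (a / c) * a * c := by field_simp
          _ ≤ (b + (a / c) ^ 2 * c) * c := mul_le_mul_of_nonneg_right hk hc
          _ = b * c + a ^ 2 := by field_simp
      nlinarith
  calc a ≤ Real.sqrt (c * b) := by
        rw [show a = Real.sqrt (a ^ 2) by rw [Real.sqrt_sq ha]]
        exact Real.sqrt_le_sqrt hsq
    _ = Real.sqrt c * Real.sqrt b := Real.sqrt_mul hc _
end

section
/- Let H be a VE-space over a topologically ordered *-space Z, T : H → H a positive selfadjoint linear operator, and p an increasing seminorm on Z. Assume T is m-topologisable for p, i.e., there exist a constant D ≥ 0 and a function r : H → [0,∞) such that p([Tⁿh, Tⁿh])^{1/2} ≤ Dⁿ r(h) for all n ∈ ℕ and all h ∈ H. Then p([Th, h]) ≤ D · p([h, h]) for all h ∈ H. -/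
/-- Krein–Reid–Lax–Dieudonné-type inequality: if `T` is a positive
selfadjoint operator on a VE-space `H` over a topologically ordered *-space
that is m-topologisable for the increasing seminorm `p` (i.e.
`p([Tⁿh,Tⁿh])^{1/2} ≤ Dⁿ r(h)` for some `D ≥ 0` and `r : H → [0,∞)`), then
`p([Th,h]) ≤ D p([h,h])`. -/
theorem mtopologisable_positive_operator_bound {Z E : Type*}
    [AddCommGroup Z] [Module ℂ Z] [TopologicalSpace Z]
    [AddCommGroup E] [Module ℂ E]
    (O : OrderedStarSpace Z) (N : IncSeminorm O) (G : VEGramian O E)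
    (T : Module.End ℂ E)
    (hTpos : ∀ h : E, G.ip (T h) h ∈ O.pos)
    (hTsa : ∀ h g : E, G.ip (T h) g = G.ip h (T g))
    (D : ℝ) (hD : 0 ≤ D) (r : E → ℝ) (hr : ∀ h : E, 0 ≤ r h)
    (hmtop : ∀ (n : ℕ) (h : E),
      Real.sqrt (N.p (G.ip ((T ^ n) h) ((T ^ n) h))) ≤ D ^ n * r h) :
    ∀ h : E, N.p (G.ip (T h) h) ≤ D * N.p (G.ip h h) := by
  intro h
  set q := N.p (G.ip h h) with hq_def
  have hq0 : 0 ≤ q := N.nonneg _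
  -- left (conjugate) linearity from hermitian symmetry
  have ip_add_left : ∀ x y z : E, G.ip (x + y) z = G.ip x z + G.ip y z := by
    intro x y z
    rw [G.herm, G.add_right, O.star_add, ← G.herm, ← G.herm]
  have ip_smul_left : ∀ (c : ℂ) (x y : E),
      G.ip (c • x) y = (starRingEnd ℂ) c • G.ip x y := by
    intro c x y
    rw [G.herm, G.smul_right, O.star_smul, ← G.herm]
  -- expansion of the gramian of x + t•y for real t
  have expand : ∀ (t : ℝ) (x y : E),
      G.ip (x + (t : ℂ) • y) (x + (t : ℂ) • y)
        = G.ip x x + (t : ℂ) • (G.ip x y + G.ip y x)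
          + (((t * t : ℝ)) : ℂ) • (G.ip y y : Z) := by
    intro t x y
    simp only [G.add_right, ip_add_left, G.smul_right, ip_smul_left,
      Complex.conj_ofReal, smul_add, smul_smul]
    push_cast
    abel
  -- Schwarz-type inequality (squared form) for a vector g with [g,h] positive
  have schwarz : ∀ g : E, G.ip g h ∈ O.pos →
      (N.p (G.ip g h)) ^ 2 ≤ N.p (G.ip g g) * q := by
    intro g hpos
    set s := G.ip g h with hs_def
    set a := G.ip g g with ha_def
    set b := G.ip h h with hb_def
    have hs_sa : O.star s = s := O.pos_selfadjoint _ hpos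
    have hhg : G.ip h g = s := by rw [G.herm, ← hs_def, hs_sa]
    have key : ∀ u : ℝ, 0 < u → 2 * u * N.p s ≤ N.p a + u ^ 2 * N.p b := by
      intro u hu
      have hmem : G.ip (g + ((-u : ℝ) : ℂ) • h) (g + ((-u : ℝ) : ℂ) • h)
          ∈ O.pos := G.ip_pos _
      rw [expand] at hmem
      rw [hhg, ← hs_def, ← ha_def, ← hb_def] at hmem
      have hdiff : (a + ((u ^ 2 : ℝ) : ℂ) • b) - ((2 * u : ℝ) : ℂ) • s
          ∈ O.pos := by
        convert hmem using 1
        push_cast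
        module
      have hsmul : ((2 * u : ℝ) : ℂ) • s ∈ O.pos :=
        O.pos_smul (2 * u) (by positivity) s hpos
      have hmono := N.mono _ _ hsmul hdiff
      rw [N.smul] at hmono
      have hrhs : N.p (a + ((u ^ 2 : ℝ) : ℂ) • b) ≤ N.p a + u ^ 2 * N.p b := by
        calc N.p (a + ((u ^ 2 : ℝ) : ℂ) • b)
            ≤ N.p a + N.p (((u ^ 2 : ℝ) : ℂ) • b) := N.add_le _ _
          _ = N.p a + u ^ 2 * N.p b := by
              rw [N.smul, Complex.norm_real, Real.norm_eq_abs, abs_of_nonneg (by positivity)]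
      have habs : ‖((2 * u : ℝ) : ℂ)‖ = 2 * u := by
        rw [Complex.norm_real, Real.norm_eq_abs, abs_of_nonneg (by positivity)]
      rw [habs] at hmono
      exact hmono.trans hrhs
    -- deduce the squared Schwarz inequality from the family of inequalities
    have hX : 0 ≤ N.p s := N.nonneg _
    have hA : 0 ≤ N.p a := N.nonneg _
    have hB : 0 ≤ N.p b := N.nonneg _
    rcases eq_or_lt_of_le hX with hX0 | hX0
    · rw [← hX0]
      nlinarith [mul_nonneg hA hq0]
    rcases eq_or_lt_of_le hB with hB0 | hB0
    · exfalso
      have hk := key ((N.p a + 1) / (2 * N.p s)) (by positivity)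
      rw [← hB0] at hk
      have h2 : 2 * ((N.p a + 1) / (2 * N.p s)) * N.p s = N.p a + 1 := by
        field_simp
      nlinarith
    · have hk := key (N.p s / N.p b) (div_pos hX0 hB0)
      have hb' : (N.p b) ≠ 0 := ne_of_gt hB0
      have hk' := mul_le_mul_of_nonneg_right hk hB
      rw [div_pow] at hk'
      have h1 : (N.p s ^ 2 / N.p b ^ 2 * N.p b) * N.p b = N.p s ^ 2 := by
        field_simp
      have h2 : (2 * (N.p s / N.p b) * N.p s) * N.p b = 2 * N.p s ^ 2 := by
        field_simp
      nlinarith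
  -- selfadjointness of powers of T
  have pow_sa : ∀ (m : ℕ) (x y : E),
      G.ip ((T ^ m) x) y = G.ip x ((T ^ m) y) := by
    intro m
    induction m with
    | zero => intro x y; simp
    | succ k ih =>
        intro x y
        have h1 : (T ^ (k + 1)) x = (T ^ k) (T x) := by rw [pow_succ]; rfl
        have h2 : (T ^ (k + 1)) y = T ((T ^ k) y) := by rw [pow_succ']; rfl
        rw [h1, h2, ih, hTsa]
  -- doubling identity
  have pow2 : ∀ n : ℕ,
      G.ip ((T ^ 2 ^ (n + 1)) h) h = G.ip ((T ^ 2 ^ n) h) ((T ^ 2 ^ n) h) := by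
    intro n
    have h1 : (2 : ℕ) ^ (n + 1) = 2 ^ n + 2 ^ n := by ring
    have h2 : (T ^ 2 ^ (n + 1)) h = (T ^ 2 ^ n) ((T ^ 2 ^ n) h) := by
      rw [h1, pow_add]; rfl
    rw [h2, pow_sa]
  -- positivity of the relevant gramians
  have poscross : ∀ n : ℕ, G.ip ((T ^ 2 ^ n) h) h ∈ O.pos := by
    intro n
    cases n with
    | zero => simpa using hTpos h
    | succ k => rw [pow2 k]; exact G.ip_pos _
  set x : ℕ → ℝ := fun n => N.p (G.ip ((T ^ 2 ^ n) h) h) with hx_def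
  have hx0 : ∀ n, 0 ≤ x n := fun n => N.nonneg _
  have step : ∀ n, (x n) ^ 2 ≤ x (n + 1) * q := by
    intro n
    have hs := schwarz ((T ^ 2 ^ n) h) (poscross n)
    rw [← pow2 n] at hs
    exact hs
  have bound : ∀ n, x (n + 1) ≤ D ^ 2 ^ (n + 1) * (r h) ^ 2 := by
    intro n
    have hm := hmtop (2 ^ n) h
    have hXnn : 0 ≤ N.p (G.ip ((T ^ 2 ^ n) h) ((T ^ 2 ^ n) h)) := N.nonneg _
    have hsq : N.p (G.ip ((T ^ 2 ^ n) h) ((T ^ 2 ^ n) h))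
        ≤ (D ^ 2 ^ n * r h) ^ 2 := by
      have := Real.sqrt_le_sqrt (le_refl (N.p (G.ip ((T ^ 2 ^ n) h) ((T ^ 2 ^ n) h))))
      nlinarith [Real.sq_sqrt hXnn, Real.sqrt_nonneg (N.p (G.ip ((T ^ 2 ^ n) h) ((T ^ 2 ^ n) h))), hm]
    have hxn : x (n + 1) = N.p (G.ip ((T ^ 2 ^ n) h) ((T ^ 2 ^ n) h)) := by
      show N.p (G.ip ((T ^ 2 ^ (n + 1)) h) h) = _
      rw [pow2 n]
    rw [hxn]
    calc N.p (G.ip ((T ^ 2 ^ n) h) ((T ^ 2 ^ n) h)) ≤ (D ^ 2 ^ n * r h) ^ 2 := hsq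
      _ = D ^ 2 ^ (n + 1) * (r h) ^ 2 := by
          rw [mul_pow, ← pow_mul, ← pow_succ]
  -- iterated inequality
  have iter : ∀ n, (x 0) ^ 2 ^ (n + 1) ≤ x (n + 1) * q ^ (2 ^ (n + 1) - 1) := by
    intro n
    induction n with
    | zero => simpa using step 0
    | succ k ih =>
        have hsq := pow_le_pow_left₀ (pow_nonneg (hx0 0) _) ih 2
        have he1 : ((x 0) ^ 2 ^ (k + 1)) ^ 2 = (x 0) ^ 2 ^ (k + 2) := by
          rw [← pow_mul, ← pow_succ]
        have he2 : (x (k + 1) * q ^ (2 ^ (k + 1) - 1)) ^ 2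
            = (x (k + 1)) ^ 2 * q ^ (2 ^ (k + 2) - 2) := by
          rw [mul_pow, ← pow_mul]
          congr 1
          have : (2 ^ (k + 1) - 1) * 2 = 2 ^ (k + 2) - 2 := by
            have h1 : (1 : ℕ) ≤ 2 ^ (k + 1) := Nat.one_le_two_pow
            have h2 : (2 : ℕ) ^ (k + 2) = 2 * 2 ^ (k + 1) := by ring
            omega
          rw [this]
        rw [he1, he2] at hsq
        calc (x 0) ^ 2 ^ (k + 2) ≤ (x (k + 1)) ^ 2 * q ^ (2 ^ (k + 2) - 2) := hsq
          _ ≤ (x (k + 2) * q) * q ^ (2 ^ (k + 2) - 2) := by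
              apply mul_le_mul_of_nonneg_right (step (k + 1))
              positivity
          _ = x (k + 2) * q ^ (2 ^ (k + 2) - 1) := by
              rw [mul_assoc]
              congr 1
              rw [← pow_succ']
              congr 1
              have h1 : (2 : ℕ) ≤ 2 ^ (k + 2) := by
                calc (2:ℕ) = 2 ^ 1 := rfl
                  _ ≤ 2 ^ (k + 2) := Nat.pow_le_pow_right (by norm_num) (by omega)
              omega
  have combined : ∀ n, (x 0) ^ 2 ^ (n + 1)
      ≤ D ^ 2 ^ (n + 1) * (r h) ^ 2 * q ^ (2 ^ (n + 1) - 1) := by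
    intro n
    calc (x 0) ^ 2 ^ (n + 1) ≤ x (n + 1) * q ^ (2 ^ (n + 1) - 1) := iter n
      _ ≤ D ^ 2 ^ (n + 1) * (r h) ^ 2 * q ^ (2 ^ (n + 1) - 1) := by
          apply mul_le_mul_of_nonneg_right (bound n)
          positivity
  -- conclusion
  have hgoal : x 0 ≤ D * q := by
    have hDq : 0 ≤ D * q := mul_nonneg hD hq0
    rcases eq_or_lt_of_le hDq with hDq0 | hDq0
    · -- D * q = 0 : use n = 0
      have hc0 := combined 0
      have hc0 : (x 0) ^ 2 ^ 1 ≤ D ^ 2 ^ 1 * (r h) ^ 2 * q ^ (2 ^ 1 - 1) := hc0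
      have hz : D ^ 2 ^ 1 * (r h) ^ 2 * q ^ (2 ^ 1 - 1) = 0 := by
        rcases mul_eq_zero.mp hDq0.symm with hD0 | hq0'
        · simp [hD0]
        · simp [hq0']
      rw [hz] at hc0
      have : (x 0) ^ 2 ^ 1 ≤ 0 := hc0
      norm_num at this
      rw [← hDq0]
      nlinarith [hx0 0]
    · by_contra hc
      push_neg at hc
      have hqpos : 0 < q := by
        rcases eq_or_lt_of_le hq0 with h0 | h0
        · exfalso; rw [← h0, mul_zero] at hDq0; exact lt_irrefl _ hDq0
        · exact h0
      have hrho : 1 < x 0 / (D * q) := (one_lt_div hDq0).mpr hc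
      obtain ⟨k, hk⟩ := pow_unbounded_of_one_lt ((r h) ^ 2 / q) hrho
      set m := 2 ^ (k + 1) with hm_def
      have hkm : k ≤ m := by
        have := Nat.lt_two_pow_self (n := k)
        have h2 : (2:ℕ) ^ k ≤ 2 ^ (k + 1) := Nat.pow_le_pow_right (by norm_num) (by omega)
        omega
      have hmono : (x 0 / (D * q)) ^ k ≤ (x 0 / (D * q)) ^ m :=
        pow_le_pow_right₀ (le_of_lt hrho) hkm
      have hle : (x 0 / (D * q)) ^ m ≤ (r h) ^ 2 / q := by
        have hcm := combined k
        have hqm : q ^ (m - 1) * q = q ^ m := by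
          rw [← pow_succ]
          congr 1
          have h1 : (1:ℕ) ≤ m := Nat.one_le_two_pow
          omega
        have hmul : (x 0) ^ m * q ≤ (D * q) ^ m * (r h) ^ 2 := by
          have := mul_le_mul_of_nonneg_right hcm hq0
          calc (x 0) ^ m * q ≤ D ^ m * (r h) ^ 2 * q ^ (m - 1) * q := this
            _ = D ^ m * q ^ m * (r h) ^ 2 := by
                rw [mul_assoc, hqm]; ring
            _ = (D * q) ^ m * (r h) ^ 2 := by rw [mul_pow]
        rw [div_pow, div_le_div_iff₀ (pow_pos hDq0 m) hqpos]
        calc (x 0) ^ m * q ≤ (D * q) ^ m * (r h) ^ 2 := hmul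
          _ = (r h) ^ 2 * (D * q) ^ m := by ring
      exact absurd (hk.trans_le (hmono.trans hle)) (lt_irrefl _)
  have hx00 : x 0 = N.p (G.ip (T h) h) := by
    show N.p (G.ip ((T ^ 2 ^ 0) h) h) = _
    norm_num
  rw [← hx00]
  exact hgoal
end

section
/- Let H be a topological VE-space over a topologically ordered *-space Z and let k : X × X → L*_c(H) be a 2-positive kernel such that k(x,x) satisfies: for each increasing continuous seminorm p on Z there is a constant C_x ≥ 0 with p([k(x,x)h, h]) ≤ C_x p([h,h]) for all h ∈ H. Then for any x, y ∈ X and increasing continuous seminorm p, there is a constant C ≥ 0 such that p([k(y,x)h, k(y,x)h]) ≤ C · p([h,h]) for all h ∈ H. -/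
/-- Auxiliary real inequality: if `2 t α ≤ Cx β + t² Cy α` for all `t ≥ 0`,
then `α ≤ Cx Cy β`. -/
lemma two_pos_aux_real (Cx Cy α β : ℝ) (hCx : 0 ≤ Cx) (hCy : 0 ≤ Cy)
    (hα : 0 ≤ α) (hβ : 0 ≤ β)
    (H : ∀ t : ℝ, 0 ≤ t → 2 * t * α ≤ Cx * β + t ^ 2 * Cy * α) :
    α ≤ Cx * Cy * β := by
  rcases eq_or_lt_of_le hCy with h0 | hpos
  · -- Cy = 0
    have hCy0 : Cy = 0 := h0.symm
    rcases eq_or_lt_of_le hα with hα0 | hαpos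
    · rw [← hα0]; positivity
    · exfalso
      have ht : (0:ℝ) ≤ (Cx * β + 1) / α := by positivity
      have := H ((Cx * β + 1) / α) ht
      rw [hCy0] at this
      have hne : α ≠ 0 := ne_of_gt hαpos
      have hcalc : 2 * ((Cx * β + 1) / α) * α = 2 * (Cx * β + 1) := by
        field_simp
      nlinarith
  · have ht : (0:ℝ) ≤ 1 / Cy := by positivity
    have := H (1 / Cy) ht
    have h2 : (1 / Cy) ^ 2 * Cy = 1 / Cy := by
      field_simp
    rw [h2] at this
    -- 2 (1/Cy) α ≤ Cx β + (1/Cy) α  ⇒  (1/Cy) α ≤ Cx β  ⇒  α ≤ Cy Cx β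
    have h3 : (1 / Cy) * α ≤ Cx * β := by linarith
    have h4 := mul_le_mul_of_nonneg_left h3 (le_of_lt hpos)
    rw [show Cy * ((1 / Cy) * α) = α by field_simp] at h4
    nlinarith

/-- propagation of boundedness through a 2-positive kernel:
if the diagonal of a 2-positive kernel `k` satisfies
`p([k(z,z)h, h]) ≤ C_z p([h,h])` for every point `z` (for the increasing
continuous seminorm `p`), then for all `x, y` there is `C ≥ 0` with
`p([k(y,x)h, k(y,x)h]) ≤ C p([h,h])` for all `h`. -/
theorem two_positive_kernel_propagation {Z E X : Type*} [AddCommGroup Z]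
    [Module ℂ Z] [TopologicalSpace Z] [AddCommGroup E] [Module ℂ E] [Nonempty X]
    (O : OrderedStarSpace Z) (N : IncSeminorm O) (hcont : Continuous N.p)
    (G : VEGramian O E)
    (k : X → X → Module.End ℂ E)
    (hadj : ∀ x y : X, ∃ S : Module.End ℂ E,
      ∀ h g : E, G.ip (k x y h) g = G.ip h (S g))
    (h2pos : ∀ (x₁ x₂ : X) (h₁ h₂ : E),
      G.ip (k x₁ x₁ h₁) h₁ + G.ip (k x₁ x₂ h₂) h₁ +
        G.ip (k x₂ x₁ h₁) h₂ + G.ip (k x₂ x₂ h₂) h₂ ∈ O.pos)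
    (hdiag : ∀ z : X, ∃ C : ℝ, 0 ≤ C ∧
      ∀ h : E, N.p (G.ip (k z z h) h) ≤ C * N.p (G.ip h h)) :
    ∀ x y : X, ∃ C : ℝ, 0 ≤ C ∧
      ∀ h : E, N.p (G.ip (k y x h) (k y x h)) ≤ C * N.p (G.ip h h) := by
  clear hcont hadj
  -- basic *-space facts
  have star0 : O.star 0 = 0 := by
    have h := O.star_add 0 0
    rw [add_zero] at h
    exact (add_eq_left.mp h.symm)
  have star_ip : ∀ u v : E, O.star (G.ip u v) = G.ip v u := by
    intro u v
    rw [G.herm v u]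
  have ip_zero_right : ∀ u : E, G.ip u 0 = 0 := by
    intro u
    have h := G.add_right u 0 0
    rw [add_zero] at h
    exact (add_eq_left.mp h.symm)
  have ip_zero_left : ∀ u : E, G.ip 0 u = 0 := by
    intro u
    rw [G.herm, ip_zero_right, star0]
  have ip_smul_left : ∀ (c : ℂ) (u v : E),
      G.ip (c • u) v = (starRingEnd ℂ) c • G.ip u v := by
    intro c u v
    rw [G.herm (c • u) v, G.smul_right, O.star_smul, ← G.herm]
  intro x y
  obtain ⟨Cx, hCx0, hCx⟩ := hdiag x
  obtain ⟨Cy, hCy0, hCy⟩ := hdiag y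
  refine ⟨Cx * Cy, mul_nonneg hCx0 hCy0, fun h => ?_⟩
  set v : E := k y x h with hv
  -- diagonal positivity
  have hposx : G.ip (k x x h) h ∈ O.pos := by
    have hp := h2pos x y h 0
    simpa [map_zero, ip_zero_right, ip_zero_left] using hp
  have hposy : ∀ u : E, G.ip (k y y u) u ∈ O.pos := by
    intro u
    have hp := h2pos x y 0 u
    simpa [map_zero, ip_zero_right, ip_zero_left] using hp
  -- selfadjointness of diagonal terms
  have dx : G.ip h (k x x h) = G.ip (k x x h) h := by
    rw [← star_ip]; exact O.pos_selfadjoint _ hposx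
  have dy : ∀ u : E, G.ip u (k y y u) = G.ip (k y y u) u := by
    intro u
    rw [← star_ip]; exact O.pos_selfadjoint _ (hposy u)
  -- step 1: F(g) : star-symmetrized identity from selfadjointness of 2-positive sums
  have F : ∀ g : E, G.ip h (k x y g) + G.ip g (k y x h)
      = G.ip (k x y g) h + G.ip (k y x h) g := by
    intro g
    have hS := h2pos x y h g
    have hsa := O.pos_selfadjoint _ hS
    rw [O.star_add, O.star_add, O.star_add, star_ip, star_ip, star_ip, star_ip,
      dx, dy] at hsa
    have h1 := add_right_cancel hsa
    rw [add_assoc, add_assoc] at h1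
    exact add_left_cancel h1
  -- step 2: Hermitian symmetry via the rotation g ↦ i g
  have key : ∀ g : E, G.ip g (k y x h) = G.ip (k x y g) h := by
    intro g
    have F1 := F g
    have F2 := F (Complex.I • g)
    rw [map_smul, G.smul_right, ip_smul_left, ip_smul_left, G.smul_right,
      Complex.conj_I] at F2
    -- multiply F2 by I
    have F3 := congrArg (fun z => Complex.I • z) F2
    simp only [smul_add, smul_smul, neg_smul, smul_neg,
      Complex.I_mul_I, neg_neg, one_smul, neg_one_smul] at F3
    -- F3 : -(I•I•…) combination; now add F1 and F3
    have hsum := congrArg₂ (· + ·) F3 F1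
    have h2 : G.ip g (k y x h) + G.ip g (k y x h)
        = G.ip (k x y g) h + G.ip (k x y g) h := by
      have lhs : (-G.ip h (k x y g) + G.ip g (k y x h))
          + (G.ip h (k x y g) + G.ip g (k y x h))
          = G.ip g (k y x h) + G.ip g (k y x h) := by abel
      have rhs : (G.ip (k x y g) h + -G.ip (k y x h) g)
          + (G.ip (k x y g) h + G.ip (k y x h) g)
          = G.ip (k x y g) h + G.ip (k x y g) h := by abel
      rw [← lhs, ← rhs]
      exact hsum
    have h3 := congrArg (fun z => ((1:ℂ)/2) • z) h2
    simpa [smul_add, ← two_smul ℂ, smul_smul] using h3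
  -- step 3: B = A where A = [v,v], B = [k(x,y)v, h]
  have hA : G.ip (k x y v) h = G.ip v v := by
    have h1 : G.ip v (k y x h) = G.ip (k x y v) h := key v
    rw [← hv] at h1
    -- h1 : ip v v = ip (k x y v) h
    exact h1.symm
  -- step 4: the quadratic inequality, for every t ≥ 0
  have quad : ∀ t : ℝ, 0 ≤ t →
      2 * t * N.p (G.ip v v) ≤ Cx * N.p (G.ip h h)
        + t ^ 2 * Cy * N.p (G.ip v v) := by
    intro t ht
    have hS := h2pos x y h ((-(t:ℂ)) • v)
    rw [map_smul, ip_smul_left, G.smul_right, map_smul, G.smul_right,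
      ip_smul_left] at hS
    have hconj : (starRingEnd ℂ) (-(t:ℂ)) = -(t:ℂ) := by
      simp [Complex.conj_ofReal]
    rw [hconj, hA, ← hv] at hS
    -- hS : T1 + (-(t))•A + (-(t))•A + (-(t))•((-(t))•D2) ∈ pos
    have hrw : G.ip (k x x h) h + (-(t:ℂ)) • G.ip v v + (-(t:ℂ)) • G.ip v v
        + (-(t:ℂ)) • (-(t:ℂ)) • G.ip (k y y v) v
        = (G.ip (k x x h) h + ((t^2 : ℝ) : ℂ) • G.ip (k y y v) v)
          - ((2*t : ℝ) : ℂ) • G.ip v v := by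
      push_cast
      module
    rw [hrw] at hS
    have hxel : ((2*t : ℝ) : ℂ) • G.ip v v ∈ O.pos :=
      O.pos_smul (2*t) (by linarith) _ (G.ip_pos v)
    have hmono := N.mono _ _ hxel hS
    have hL : N.p (((2*t : ℝ) : ℂ) • G.ip v v) = (2*t) * N.p (G.ip v v) := by
      rw [N.smul, Complex.norm_real, Real.norm_eq_abs, abs_of_nonneg (by linarith)]
    have hR : N.p (G.ip (k x x h) h + ((t^2 : ℝ) : ℂ) • G.ip (k y y v) v)
        ≤ N.p (G.ip (k x x h) h) + t^2 * N.p (G.ip (k y y v) v) := by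
      have := N.add_le (G.ip (k x x h) h) (((t^2 : ℝ) : ℂ) • G.ip (k y y v) v)
      rw [N.smul, Complex.norm_real, Real.norm_eq_abs, abs_of_nonneg (by positivity)] at this
      exact this
    have hCxh := hCx h
    have hCyv := hCy v
    have ht2 : t^2 * N.p (G.ip (k y y v) v) ≤ t^2 * (Cy * N.p (G.ip v v)) :=
      mul_le_mul_of_nonneg_left hCyv (by positivity)
    calc 2 * t * N.p (G.ip v v) = N.p (((2*t : ℝ) : ℂ) • G.ip v v) := hL.symm
      _ ≤ N.p (G.ip (k x x h) h + ((t^2 : ℝ) : ℂ) • G.ip (k y y v) v) := hmono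
      _ ≤ N.p (G.ip (k x x h) h) + t^2 * N.p (G.ip (k y y v) v) := hR
      _ ≤ Cx * N.p (G.ip h h) + t^2 * Cy * N.p (G.ip v v) := by nlinarith
  exact two_pos_aux_real Cx Cy _ _ hCx0 hCy0 (N.nonneg _) (N.nonneg _) quad
end

section
/- Let A be a C*-algebra, H a Hilbert C*-module over A, X a nonempty set, and k : X × X → L*(H) a positive semidefinite kernel. Then for every x ∈ X there exists a constant c(x) ≥ 0 such that for all n ∈ ℕ, y₁,…,y_n ∈ X, and h₁,…,h_n ∈ H, ‖Σ_{i,j=1}^{n} [k(x,y_i)h_i, k(x,y_j)h_j]‖ ≤ c(x) · ‖Σ_{i,j=1}^{n} [k(y_j,y_i)h_i, h_j]‖. -/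
/-- for a positive semidefinite kernel `k` with values adjointable
operators on a Hilbert C*-module `H` over a C*-algebra `A`, for every `x` there
is `c(x) ≥ 0` such that
`‖Σᵢⱼ [k(x,yᵢ)hᵢ, k(x,yⱼ)hⱼ]‖ ≤ c(x) ‖Σᵢⱼ [k(yⱼ,yᵢ)hᵢ, hⱼ]‖`. -/
theorem psd_kernel_hilbert_module_bound
    {A : Type*} [NormedRing A] [StarRing A] [CStarRing A] [NormedAlgebra ℂ A]
    [CompleteSpace A] [StarModule ℂ A] [PartialOrder A] [StarOrderedRing A]
    {H : Type*} [NormedAddCommGroup H] [NormedSpace ℂ H] [CompleteSpace H]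
    {X : Type*} [Nonempty X]
    (sm : H → A → H) (ip : H → H → A)
    (add_right : ∀ x y z : H, ip x (y + z) = ip x y + ip x z)
    (smul_right : ∀ (c : ℂ) (x y : H), ip x (c • y) = c • ip x y)
    (sm_right : ∀ (x y : H) (a : A), ip x (sm y a) = ip x y * a)
    (herm : ∀ x y : H, star (ip x y) = ip y x)
    (ip_pos : ∀ x : H, 0 ≤ ip x x)
    (ip_definite : ∀ x : H, ip x x = 0 → x = 0)
    (norm_eq : ∀ h : H, ‖h‖ = Real.sqrt ‖ip h h‖)
    (k : X → X → Module.End ℂ H)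
    (hadj : ∀ x y : X, ∃ S : Module.End ℂ H,
      ∀ h g : H, ip (k x y h) g = ip h (S g))
    (hpsd : ∀ (n : ℕ) (x : Fin n → X) (h : Fin n → H),
      0 ≤ ∑ i, ∑ j, ip (k (x i) (x j) (h j)) (h i)) :
    ∀ x : X, ∃ c : ℝ, 0 ≤ c ∧ ∀ (n : ℕ) (y : Fin n → X) (h : Fin n → H),
      ‖∑ i, ∑ j, ip (k x (y i) (h i)) (k x (y j) (h j))‖ ≤
        c * ‖∑ i, ∑ j, ip (k (y j) (y i) (h i)) (h j)‖ := by
  letI : CStarAlgebra A := { }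
  have crfl : ∀ (r : ℝ) (z : A), ((r:ℝ):ℂ) • z = r • z := fun _ _ => rfl
  have half : ∀ a b : A, a + a = b + b → a = b := by
    intro a b hab
    have h2 : (2:ℂ) • a = (2:ℂ) • b := by rw [two_smul, two_smul]; exact hab
    have h3 := congrArg (fun z => (2:ℂ)⁻¹ • z) h2
    simpa [smul_smul, inv_mul_cancel₀ (show (2:ℂ) ≠ 0 by norm_num)] using h3
  have cancelc : ∀ (c : ℂ) (a b : A), c ≠ 0 → c • a = c • b → a = b := by
    intro c a b hc hcab
    have h3 := congrArg (fun z => c⁻¹ • z) hcab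
    simpa [smul_smul, inv_mul_cancel₀ hc] using h3
  -- basic lemmas about ip
  have ipz : ∀ a : H, ip a 0 = 0 := by
    intro a
    have h0 := add_right a 0 0
    rw [add_zero] at h0
    have h1 : ip a 0 + 0 = ip a 0 + ip a 0 := by rw [add_zero, ← h0]
    exact (add_left_cancel h1).symm
  have ipz' : ∀ a : H, ip 0 a = 0 := by
    intro a; rw [← herm, ipz, star_zero]
  have addl : ∀ a b c : H, ip (a + b) c = ip a c + ip b c := by
    intro a b c; rw [← herm, add_right, star_add, herm, herm]
  have smull : ∀ (c : ℂ) (a b : H), ip (c • a) b = star c • ip a b := by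
    intro c a b; rw [← herm, smul_right, star_smul, herm]
  have subl : ∀ a b c : H, ip (a - b) c = ip a c - ip b c := by
    intro a b c
    have hab : a - b = a + (-1:ℂ) • b := by
      rw [neg_smul, one_smul, sub_eq_add_neg]
    rw [hab, addl, smull]
    simp [sub_eq_add_neg]
  have sumr : ∀ {m : ℕ} (a : H) (f : Fin m → H),
      ip a (∑ i, f i) = ∑ i, ip a (f i) := by
    intro m a f
    induction (Finset.univ : Finset (Fin m)) using Finset.cons_induction with
    | empty => simpa using ipz a
    | cons i s hi ih => rw [Finset.sum_cons, Finset.sum_cons, add_right, ih]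
  have suml : ∀ {m : ℕ} (a : H) (f : Fin m → H),
      (∑ i, ip (f i) a) = ip (∑ i, f i) a := by
    intro m a f
    rw [← herm, sumr, star_sum]
    exact Finset.sum_congr rfl fun i _ => (herm a (f i)).symm
  have normsq : ∀ a : H, ‖ip a a‖ = ‖a‖ ^ 2 := by
    intro a
    rw [norm_eq a, Real.sq_sqrt (norm_nonneg _)]
  -- Cauchy–Schwarz
  have hCS : ∀ a b : H, ‖ip a b‖ ≤ ‖a‖ * ‖b‖ := by
    intro a b
    rcases eq_or_ne a 0 with rfl | ha
    · simp [ipz']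
    · have hapos : (0:ℝ) < ‖a‖ := norm_pos_iff.mpr ha
      set c := ip a b with hc
      have hX : (0:A) ≤ star c * c := star_mul_self_nonneg c
      have hba : ip b a = star c := (herm a b).symm
      have hbw : ip b (sm a c) = star c * c := by
        rw [sm_right, hba]
      have hwb : ip (sm a c) b = star c * c := by
        rw [← herm, hbw, star_mul, star_star]
      have hwa : ip (sm a c) a = star c * ip a a := by
        calc ip (sm a c) a = star (ip a (sm a c)) := (herm a _).symm
          _ = star (ip a a * c) := by rw [sm_right]
          _ = star c * ip a a := by rw [star_mul, herm a a]
      have hww : ip (sm a c) (sm a c) = star c * ip a a * c := by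
        rw [sm_right, hwa]
      set s : ℝ := (‖a‖ ^ 2)⁻¹ with hs
      have hspos : 0 < s := by positivity
      have expand :
          ip ((s:ℂ) • sm a c + (-1:ℂ) • b) ((s:ℂ) • sm a c + (-1:ℂ) • b)
            = (s*s) • (star c * ip a a * c) + -(s • (star c * c))
              + -(s • (star c * c)) + ip b b := by
        simp only [add_right, addl, smull, smul_right, smul_smul, hww, hwb, hbw]
        have e1 : star ((s:ℂ)) = ((s:ℂ)) := by simp
        have e2 : star ((-1:ℂ)) = (-1:ℂ) := by simp
        rw [e1, e2,
          show ((s:ℂ)*(s:ℂ)) = ((s*s:ℝ):ℂ) by push_cast; ring,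
          show ((-1:ℂ)*(s:ℂ)) = ((-s:ℝ):ℂ) by push_cast; ring,
          show ((s:ℂ)*(-1:ℂ)) = ((-s:ℝ):ℂ) by push_cast; ring,
          show ((-1:ℂ)*(-1:ℂ)) = (1:ℂ) by norm_num, one_smul]
        simp only [crfl, neg_smul]
        abel
      have hconj : star c * ip a a * c ≤ (‖a‖^2) • (star c * c) := by
        have hcj := CStarAlgebra.star_left_conjugate_le_norm_smul
          (a := c) (b := ip a a) (IsSelfAdjoint.of_nonneg (ip_pos a))
        rwa [normsq] at hcj
      have step1 : (s*s) • (star c * ip a a * c) ≤ s • (star c * c) := by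
        calc (s*s) • (star c * ip a a * c)
            ≤ (s*s) • ((‖a‖^2) • (star c * c)) :=
              smul_le_smul_of_nonneg_left hconj (by positivity)
          _ = s • (star c * c) := by
              rw [smul_smul, hs]
              congr 1
              field_simp
      have h0 := ip_pos ((s:ℂ) • sm a c + (-1:ℂ) • b)
      rw [expand] at h0
      have h1 : s • (star c * c) ≤ ip b b := by
        have h2 : (0:A) ≤ s • (star c * c) + -(s • (star c * c))
            + -(s • (star c * c)) + ip b b :=
          le_trans h0 (add_le_add_left (add_le_add_left
            (add_le_add_left step1 _) _) _)
        have h3 : s • (star c * c) + -(s • (star c * c))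
            + -(s • (star c * c)) + ip b b = ip b b - s • (star c * c) := by abel
        rw [h3] at h2
        exact sub_nonneg.mp h2
      have h4 : star c * c ≤ (‖a‖^2) • ip b b := by
        have h5 := smul_le_smul_of_nonneg_left h1
          (le_of_lt (by positivity : (0:ℝ) < ‖a‖^2))
        rwa [smul_smul, hs, mul_inv_cancel₀
          (by positivity : (‖a‖:ℝ)^2 ≠ 0), one_smul] at h5
      have h5 : ‖star c * c‖ ≤ ‖a‖^2 * ‖b‖^2 := by
        calc ‖star c * c‖ ≤ ‖(‖a‖^2) • ip b b‖ :=
              CStarAlgebra.norm_le_norm_of_nonneg_of_le hX h4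
          _ = ‖a‖^2 * ‖ip b b‖ := by
              rw [norm_smul, Real.norm_of_nonneg (by positivity)]
          _ = ‖a‖^2 * ‖b‖^2 := by rw [normsq]
      have h6 : ‖c‖ * ‖c‖ ≤ ‖a‖^2 * ‖b‖^2 := by
        rwa [CStarRing.norm_star_mul_self] at h5
      nlinarith [h6, mul_nonneg (norm_nonneg a) (norm_nonneg b), norm_nonneg c,
        sq_nonneg (‖a‖*‖b‖ - ‖c‖), sq_nonneg (‖a‖*‖b‖ + ‖c‖)]
  -- the main argument
  intro x
  obtain ⟨S, hS⟩ := hadj x x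
  -- continuity of k x x by the closed graph theorem
  have hcl : ∀ w : H, Continuous (fun z : H => ip z w) := by
    intro w
    apply Metric.continuous_iff.mpr
    intro z ε hε
    rcases eq_or_ne w 0 with rfl | hw
    · exact ⟨1, one_pos, fun z' _ => by simpa [ipz] using hε⟩
    · refine ⟨ε / ‖w‖, div_pos hε (norm_pos_iff.mpr hw), fun z' hz' => ?_⟩
      rw [dist_eq_norm, ← subl]
      calc ‖ip (z' - z) w‖ ≤ ‖z' - z‖ * ‖w‖ := hCS _ _
        _ < (ε / ‖w‖) * ‖w‖ := by
            apply mul_lt_mul_of_pos_right _ (norm_pos_iff.mpr hw)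
            rwa [dist_eq_norm] at hz'
        _ = ε := div_mul_cancel₀ ε (ne_of_gt (norm_pos_iff.mpr hw))
  have hTc : Continuous (k x x) := by
    apply LinearMap.continuous_of_seq_closed_graph
    intro u a b hu hb
    have key : ∀ w : H, ip b w = ip (k x x a) w := by
      intro w
      have t1 : Filter.Tendsto (fun m => ip (k x x (u m)) w) Filter.atTop
          (nhds (ip b w)) := by
        have := ((hcl w).tendsto b).comp hb
        simpa [Function.comp_def] using this
      have t2 : ∀ m, ip (k x x (u m)) w = ip (u m) (S w) := fun m => hS _ _
      have t3 : Filter.Tendsto (fun m => ip (u m) (S w)) Filter.atTop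
          (nhds (ip a (S w))) := by
        have := ((hcl (S w)).tendsto a).comp hu
        simpa [Function.comp_def] using this
      have t4 : ip b w = ip a (S w) := by
        refine tendsto_nhds_unique ?_ t3
        simpa [t2] using t1
      rw [t4, ← hS]
    have hz : ip (b - k x x a) (b - k x x a) = 0 := by
      rw [subl, key, sub_self]
    exact sub_eq_zero.mp (ip_definite _ hz)
  let T : H →L[ℂ] H := ⟨k x x, hTc⟩
  refine ⟨‖T‖ + 1, by positivity, ?_⟩
  intro n y h
  set v : H := ∑ i, k x (y i) (h i) with hv
  set Q : A := ip v v with hQdef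
  set P : A := ip (k x x v) v with hPdef
  set R : A := ∑ i, ip (k (y i) x v) (h i) with hRdef
  set D : A := ∑ i, ∑ j, ip (k (y i) (y j) (h j)) (h i) with hDdef
  have hDpos : (0:A) ≤ D := hpsd n y h
  have hQpos : (0:A) ≤ Q := ip_pos v
  -- rewrite goal LHS and RHS
  have hLHS : (∑ i, ∑ j, ip (k x (y i) (h i)) (k x (y j) (h j))) = Q := by
    have e1 : ∀ i : Fin n, (∑ j, ip (k x (y i) (h i)) (k x (y j) (h j)))
        = ip (k x (y i) (h i)) v := by
      intro i; rw [hv, sumr]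
    rw [Finset.sum_congr rfl (fun i _ => e1 i), suml, ← hv]
  have hRHS : (∑ i, ∑ j, ip (k (y j) (y i) (h i)) (h j)) = D := by
    rw [Finset.sum_comm]
  rw [hLHS, hRHS]
  -- the key quadratic positivity
  have hq : ∀ c : ℂ, (0:A) ≤ (star c * c) • P + c • Q + star c • R + D := by
    intro c
    have h0 := hpsd (n+1) (Fin.cons x y) (Fin.cons (c • v) h)
    refine le_of_le_of_eq h0 ?_
    simp only [Fin.cons_zero, Fin.cons_succ, Fin.sum_univ_succ, map_smul, smull,
      smul_right, smul_smul, Finset.sum_add_distrib]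
    rw [← Finset.smul_sum, ← Finset.smul_sum]
    have hsv : (∑ i, ip (k x (y i) (h i)) v) = ip v v := by
      rw [suml, ← hv]
    rw [hsv, ← hQdef, ← hPdef, ← hRdef, ← hDdef]
    abel
  -- self-adjointness bookkeeping
  have hQsa : star Q = Q := herm v v
  have hDsa : star D = D := (IsSelfAdjoint.of_nonneg hDpos).star_eq
  have sa : ∀ c : ℂ, (star c * c) • star P + star c • Q + c • star R + D
      = (star c * c) • P + c • Q + star c • R + D := by
    intro c
    have hsa := (IsSelfAdjoint.of_nonneg (hq c)).star_eq
    calc (star c * c) • star P + star c • Q + c • star R + D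
        = star ((star c * c) • P + c • Q + star c • R + D) := by
          simp only [star_add, star_smul, star_mul, star_star, hQsa, hDsa]
      _ = _ := hsa
  have e1 := sa 1
  simp only [star_one, one_mul, one_smul] at e1
  have f1 := add_right_cancel e1
  have e2 := sa (-1)
  simp only [star_neg, star_one, neg_mul, mul_neg, neg_neg, one_mul, one_smul,
    neg_smul] at e2
  have f2 := add_right_cancel e2
  have idp : ∀ p q r : A, (p + q + r) + (p + -q + -r) = p + p := by
    intros; abel
  have idq : ∀ p q r : A, (p + q + r) - (p + -q + -r) = (q + q) + (r + r) := by
    intros; abel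
  have g1 := congrArg₂ (· + ·) f1 f2
  rw [idp, idp] at g1
  have hPsa : star P = P := half _ _ g1
  have g2 := congrArg₂ (· - ·) f1 f2
  rw [idq, idq] at g2
  have hRsa : star R = R := half _ _ (add_left_cancel g2)
  have e3 := sa Complex.I
  rw [hPsa, hRsa] at e3
  simp only [Complex.star_def, Complex.conj_I, neg_mul, Complex.I_mul_I,
    neg_neg, one_smul, neg_smul] at e3
  have f3 := add_right_cancel e3
  have idr : ∀ p a b : A, p + -a + b = p + (b - a) := by intros; abel
  have idr2 : ∀ p a b : A, p + a + -b = p + (a - b) := by intros; abel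
  rw [idr, idr2] at f3
  have f4 := add_left_cancel f3
  have f5 : Complex.I • R + Complex.I • R = Complex.I • Q + Complex.I • Q :=
    sub_eq_sub_iff_add_eq_add.mp f4
  have hQR : R = Q := cancelc Complex.I _ _ Complex.I_ne_zero (half _ _ f5)
  -- the quadratic inequality with real parameter
  have key : ∀ t : ℝ, (2*t) • Q ≤ (t*t) • P + D := by
    intro t
    have h0 := hq (-(t:ℂ))
    rw [hQR] at h0
    rw [show star (-(t:ℂ)) = -(t:ℂ) by simp] at h0
    rw [show (-(t:ℂ)) * (-(t:ℂ)) = ((t*t:ℝ):ℂ) by push_cast; ring] at h0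
    rw [show (-(t:ℂ)) = ((-t:ℝ):ℂ) by push_cast; ring] at h0
    simp only [crfl, neg_smul] at h0
    have e : (t*t) • P + -(t • Q) + -(t • Q) + D = ((t*t) • P + D) - (2*t) • Q := by
      rw [show (2*t) = t + t by ring, add_smul]; abel
    rw [e] at h0
    exact sub_nonneg.mp h0
  -- pass to norms
  have hPQ : ‖P‖ ≤ ‖T‖ * ‖Q‖ := by
    rw [hPdef, hQdef]
    calc ‖ip (k x x v) v‖ ≤ ‖k x x v‖ * ‖v‖ := hCS _ _
      _ ≤ (‖T‖ * ‖v‖) * ‖v‖ :=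
          mul_le_mul_of_nonneg_right (T.le_opNorm v) (norm_nonneg v)
      _ = ‖T‖ * ‖ip v v‖ := by rw [normsq]; ring
  have hnormineq : ∀ t : ℝ, 0 ≤ t → 2*t*‖Q‖ ≤ (t*t)*‖P‖ + ‖D‖ := by
    intro t ht
    have h1 : (0:A) ≤ (2*t) • Q := smul_nonneg (by positivity) hQpos
    calc 2*t*‖Q‖ = ‖(2*t) • Q‖ := by
          rw [norm_smul, Real.norm_of_nonneg (by positivity)]
      _ ≤ ‖(t*t) • P + D‖ := CStarAlgebra.norm_le_norm_of_nonneg_of_le h1 (key t)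
      _ ≤ ‖(t*t) • P‖ + ‖D‖ := norm_add_le _ _
      _ = (t*t)*‖P‖ + ‖D‖ := by
          rw [norm_smul, Real.norm_of_nonneg (by positivity)]
  set C : ℝ := ‖T‖ + 1 with hC
  have hCpos : 0 < C := by positivity
  have hC1 : ‖T‖ ≤ C := by rw [hC]; linarith
  have hmain := hnormineq (1/C) (by positivity)
  have hP' : ‖P‖ ≤ C * ‖Q‖ :=
    le_trans hPQ (mul_le_mul_of_nonneg_right hC1 (norm_nonneg _))
  have hstep : 2*(1/C)*‖Q‖ ≤ (1/C*(1/C))*(C*‖Q‖) + ‖D‖ :=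
    le_trans hmain (add_le_add_left
      (mul_le_mul_of_nonneg_left hP' (by positivity)) _)
  have e2' : (1/C*(1/C))*(C*‖Q‖) = (1/C)*‖Q‖ := by
    field_simp
  rw [e2'] at hstep
  have hfin : (1/C)*‖Q‖ ≤ ‖D‖ := by linarith
  have hfin2 : ‖Q‖ = C * ((1/C) * ‖Q‖) := by
    rw [← mul_assoc, mul_one_div, div_self (ne_of_gt hCpos), one_mul]
  rw [hfin2]
  exact mul_le_mul_of_nonneg_left hfin (le_of_lt hCpos)
end
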